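/- Let n be such that W_{n+1} = W_n, and let τ : S → 2^Y be any function such that (s, τ(s)) ∈ T_n for every s ∈ W_n. Then for every s ∈ W_n, the memoryless strategy g_τ defined by g_τ(X₀,…,X_{m−1}) = τ(s'_m), where s'₀ = s and s'_{j+1} = δ(s'_j, X_j ∪ τ(s'_j)), is winning from s. -/
import Mathlib


/-- The induced run of a strategy `g : (2^X)* → 2^Y` from state `s` on an
infinite input sequence `xs`:
`s'₀ = s`, `s'_{j+1} = δ(s'_j, X_j ∪ g(X₀,…,X_{j−1}))`. -/
def run {S X Y : Type} (δ : S → Set X → Set Y → S) (g : List (Set X) → Set Y)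
    (s : S) (xs : ℕ → Set X) : ℕ → S
  | 0 => s
  | j + 1 => δ (run δ g s xs j) (xs j) (g (List.ofFn fun m : Fin j => xs m))

/-- The fixpoint approximants `(T_i, W_i)`:
`T₀ = F × 2^Y`, `W₀ = F`,
`T_{i+1} = T_i ∪ {(s, Y') : s ∉ W_i and δ(s, X' ∪ Y') ∈ W_i for every X' ⊆ X}`,
`W_{i+1} = {s : (s, Y') ∈ T_{i+1} for some Y' ⊆ Y}`. -/
def TW {S X Y : Type} (δ : S → Set X → Set Y → S) (F : Set S) :
    ℕ → Set (S × Set Y) × Set S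
  | 0 => ({p | p.1 ∈ F}, F)
  | i + 1 =>
      let T := (TW δ F i).1
      let W := (TW δ F i).2
      let T' := T ∪ {p | p.1 ∉ W ∧ ∀ X' : Set X, δ p.1 X' p.2 ∈ W}
      (T', {s | ∃ Y' : Set Y, (s, Y') ∈ T'})

/-- `T_i`. -/
def Tset {S X Y : Type} (δ : S → Set X → Set Y → S) (F : Set S) (i : ℕ) :
    Set (S × Set Y) := (TW δ F i).1

/-- `W_i`. -/
def Wset {S X Y : Type} (δ : S → Set X → Set Y → S) (F : Set S) (i : ℕ) :
    Set S := (TW δ F i).2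

section Aux
variable {S X Y : Type} (δ : S → Set X → Set Y → S) (F : Set S)

lemma Tset_succ (i : ℕ) : Tset δ F (i + 1) =
    Tset δ F i ∪ {p | p.1 ∉ Wset δ F i ∧ ∀ X' : Set X, δ p.1 X' p.2 ∈ Wset δ F i} := rfl

lemma mem_Wset_iff (i : ℕ) (s : S) :
    s ∈ Wset δ F i ↔ ∃ Y' : Set Y, (s, Y') ∈ Tset δ F i := by
  cases i with
  | zero =>
    constructor
    · intro h; exact ⟨∅, h⟩
    · rintro ⟨Y', h⟩; exact h
  | succ i => exact Iff.rfl

lemma Tset_mono {i j : ℕ} (h : i ≤ j) : Tset δ F i ⊆ Tset δ F j := by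
  induction j with
  | zero => obtain rfl : i = 0 := Nat.le_zero.mp h; exact fun p hp => hp
  | succ j ih =>
    rcases Nat.lt_or_ge i (j + 1) with h' | h'
    · intro p hp
      rw [Tset_succ]
      exact Or.inl (ih (Nat.lt_succ_iff.mp h') hp)
    · obtain rfl : i = j + 1 := le_antisymm h h'
      exact fun p hp => hp

lemma Wset_mono {i j : ℕ} (h : i ≤ j) : Wset δ F i ⊆ Wset δ F j := by
  intro s hs
  rw [mem_Wset_iff] at hs ⊢
  obtain ⟨Y', hY⟩ := hs
  exact ⟨Y', Tset_mono δ F h hY⟩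

lemma Tset_fix {n : ℕ} (hfix : Wset δ F (n + 1) = Wset δ F n) :
    ∀ m, Tset δ F (n + 1 + m) = Tset δ F (n + 1) := by
  intro m
  induction m with
  | zero => rfl
  | succ m ih =>
    have hW : Wset δ F (n + 1 + m) = Wset δ F n := by
      ext s; rw [mem_Wset_iff, ← hfix, mem_Wset_iff, ih]
    have : n + 1 + (m + 1) = (n + 1 + m) + 1 := rfl
    rw [this, Tset_succ, ih, hW]
    apply Set.union_eq_self_of_subset_right
    intro p hp
    rw [Tset_succ]
    exact Or.inr hp

lemma Wset_le (n : ℕ) (hfix : Wset δ F (n + 1) = Wset δ F n) (i : ℕ) :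
    Wset δ F i ⊆ Wset δ F n := by
  rcases le_or_gt i n with h | h
  · exact Wset_mono δ F h
  · obtain ⟨m, rfl⟩ := Nat.exists_eq_add_of_le h
    intro s hs
    rw [mem_Wset_iff] at hs
    obtain ⟨Y', hY⟩ := hs
    rw [Tset_fix δ F hfix m] at hY
    rw [← hfix, mem_Wset_iff]
    exact ⟨Y', hY⟩

lemma Tset_pulldown : ∀ j i (s : S) (Y' : Set Y),
    s ∈ Wset δ F i → (s, Y') ∈ Tset δ F j → (s, Y') ∈ Tset δ F i := by
  intro j
  induction j with
  | zero => intro i s Y' _ h; exact Tset_mono δ F (Nat.zero_le i) h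
  | succ j ih =>
    intro i s Y' hW hT
    rw [Tset_succ] at hT
    rcases hT with hT | hcond
    · exact ih i s Y' hW hT
    · rcases le_or_gt i j with h | h
      · exact absurd (Wset_mono δ F h hW) hcond.1
      · have hmem : (s, Y') ∈ Tset δ F (j + 1) := by
          rw [Tset_succ]; exact Or.inr hcond
        exact Tset_mono δ F h hmem

end Aux

/-- Let `n` be such that `W_{n+1} = W_n`, and let `τ : S → 2^Y` be any function
such that `(s, τ(s)) ∈ T_n` for every `s ∈ W_n`.  Then for every `s ∈ W_n`, the
memoryless strategy `g_τ` defined by `g_τ(X₀,…,X_{m−1}) = τ(s'_m)`, where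
`s'₀ = s` and `s'_{j+1} = δ(s'_j, X_j ∪ τ(s'_j))`, is winning from `s`. -/
theorem memoryless_strategy_winning {S X Y : Type}
    [Fintype S] [Fintype X] [Fintype Y]
    (δ : S → Set X → Set Y → S) (s₀ : S) (F : Set S) (n : ℕ)
    (hfix : Wset δ F (n + 1) = Wset δ F n)
    (τ : S → Set Y) (hτ : ∀ s ∈ Wset δ F n, (s, τ s) ∈ Tset δ F n)
    (s : S) (hs : s ∈ Wset δ F n) :
    ∀ xs : ℕ → Set X, ∃ k : ℕ,
      run δ (fun l => τ (l.foldl (fun t X' => δ t X' (τ t)) s)) s xs k ∈ F := by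
  intro xs
  set f : S → Set X → S := fun t X' => δ t X' (τ t) with hf
  set g : List (Set X) → Set Y := fun l => τ (l.foldl (fun t X' => δ t X' (τ t)) s) with hg
  have run_eq : ∀ j, run δ g s xs j = (List.ofFn fun m : Fin j => xs m).foldl f s := by
    intro j
    induction j with
    | zero => simp [run]
    | succ j ih =>
      have h1 : run δ g s xs (j + 1)
          = δ (run δ g s xs j) (xs j) (g (List.ofFn fun m : Fin j => xs m)) := rfl
      have h2 : (List.ofFn fun m : Fin (j + 1) => xs m)
          = (List.ofFn fun m : Fin j => xs m) ++ [xs j] := by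
        rw [List.ofFn_succ']
        simp
      rw [h1, ih, h2, List.foldl_append]
      simp [hg, hf, ih]
  have step : ∀ k, run δ g s xs (k + 1)
      = δ (run δ g s xs k) (xs k) (τ (run δ g s xs k)) := by
    intro k
    have hgk : g (List.ofFn fun m : Fin k => xs m) = τ (run δ g s xs k) := by
      rw [run_eq k]
    have h1 : run δ g s xs (k + 1)
        = δ (run δ g s xs k) (xs k) (g (List.ofFn fun m : Fin k => xs m)) := rfl
    rw [h1, hgk]
  suffices H : ∀ i k, run δ g s xs k ∈ Wset δ F n → run δ g s xs k ∈ Wset δ F i →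
      ∃ k', run δ g s xs k' ∈ F by
    have h0 : run δ g s xs 0 = s := rfl
    exact H n 0 (h0 ▸ hs) (h0 ▸ hs)
  intro i
  induction i with
  | zero => intro k _ h0; exact ⟨k, h0⟩
  | succ i ih =>
    intro k hWn hWi
    have hT : (run δ g s xs k, τ (run δ g s xs k)) ∈ Tset δ F (i + 1) :=
      Tset_pulldown δ F n (i + 1) _ _ hWi (hτ _ hWn)
    rw [Tset_succ] at hT
    rcases hT with hT | hT
    · exact ih k hWn ((mem_Wset_iff δ F i _).mpr ⟨_, hT⟩)
    · have hnext : run δ g s xs (k + 1) ∈ Wset δ F i := by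
        rw [step k]; exact hT.2 (xs k)
      exact ih (k + 1) (Wset_le δ F n hfix i hnext) hnext
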